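/- Let R be a commutative ℚ-algebra, M an R-module, and d : R → M a derivation. Let a, b, x, y ∈ R with d a = 0, d b = 0, y invertible in R, and y² = x³ + a·x + b. Then: (i) (2y)⁻¹·d x = (2y³)⁻¹·(2a·x + 3b)·d x − d(x·y⁻¹); (ii) (2y)⁻¹·x·d x = (6y³)⁻¹·(2a² − 9b·x)·d x + d(x²·y⁻¹ + (2a/3)·y⁻¹). In other words, the differentials of the second kind ω = dx/(2y) and φ = x·dx/(2y) are congruent, modulo exact elements, to (2ax+3b)dx/(2y³) and (2a²−9bx)dx/(6y³) respectively. -/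
import Mathlib


/-- With `y² = x³ + ax + b`, `da = db = 0`, `y` invertible with inverse `yi`, the
differentials of the second kind `ω = dx/(2y)` and `φ = x·dx/(2y)` are congruent, modulo
exact elements, to `(2ax+3b)dx/(2y³)` and `(2a²−9bx)dx/(6y³)` respectively:
(i) `(2y)⁻¹·dx = (2y³)⁻¹·(2ax + 3b)·dx − d(x/y)`;
(ii) `(2y)⁻¹·x·dx = (6y³)⁻¹·(2a² − 9bx)·dx + d(x²/y + (2a/3)/y)`. -/
theorem stmt_16 {R M : Type*} [CommRing R] [Algebra ℚ R]
    [AddCommGroup M] [Module R M] [Module ℚ M] [IsScalarTower ℚ R M]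
    (d : Derivation ℚ R M)
    (a b x y yi : R) (hy : y * yi = 1)
    (ha : d a = 0) (hb : d b = 0) (hxy : y ^ 2 = x ^ 3 + a * x + b) :
    (((1 / 2 : ℚ) • yi) • d x
        = ((1 / 2 : ℚ) • (yi ^ 3 * (2 * a * x + 3 * b))) • d x - d (x * yi)) ∧
    (((1 / 2 : ℚ) • (x * yi)) • d x
        = ((1 / 6 : ℚ) • (yi ^ 3 * (2 * a ^ 2 - 9 * b * x))) • d x
          + d (x ^ 2 * yi + ((2 / 3 : ℚ) • a) * yi)) := by
  have hA : algebraMap ℚ R (1/2) * 2 = 1 := by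
    rw [← map_ofNat (algebraMap ℚ R) 2, ← map_mul]; norm_num
  have hC : algebraMap ℚ R (1/6) * 6 = 1 := by
    rw [← map_ofNat (algebraMap ℚ R) 6, ← map_mul]; norm_num
  have h2 : d (y ^ 2) = d (x ^ 3 + a * x + b) := by rw [hxy]
  simp only [map_add, Derivation.leibniz, Derivation.leibniz_pow, ha, hb] at h2
  norm_num at h2
  have hdy : d y = ((1/2 : ℚ) • (yi * (3 * x ^ 2 + a))) • d x := by
    linear_combination (norm := skip) ((1/2 : ℚ) • yi) • h2
    match_scalars
    · simp only [Algebra.smul_def]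
      linear_combination (-1 : R) * hA - (2 * algebraMap ℚ R (1/2)) * hy
    · simp only [Algebra.smul_def]
      ring
  have hdyi : d yi = (-((1/2 : ℚ) • (yi^3 * (3 * x ^ 2 + a)))) • d x := by
    have h1 := d.leibniz y yi
    rw [hy, hdy] at h1
    simp only [Derivation.map_one_eq_zero] at h1
    linear_combination (norm := skip) (-yi) • h1
    match_scalars
    · linear_combination (-1 : R) * hy
    · simp only [Algebra.smul_def]; ring
  constructor
  · rw [d.leibniz, hdyi]
    match_scalars
    simp only [Algebra.smul_def]
    linear_combination (3 * algebraMap ℚ R (1/2) * yi^3) * hxy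
      + (-3 * algebraMap ℚ R (1/2) * yi * (y * yi + 1)) * hy + (-yi) * hA
  · simp only [map_add, Derivation.leibniz, Derivation.leibniz_pow, Derivation.map_smul,
      ha, smul_zero, add_zero, hdyi]
    match_scalars
    simp only [Algebra.smul_def]
    have hA3 : algebraMap ℚ R (1/2) = algebraMap ℚ R (1/6) * 3 := by
      rw [← map_ofNat (algebraMap ℚ R) 3, ← map_mul]; norm_num
    have hBA : algebraMap ℚ R (2/3) * algebraMap ℚ R (1/2) = algebraMap ℚ R (1/6) * 2 := by
      rw [← map_mul, show (2:R) = algebraMap ℚ R 2 from (map_ofNat _ 2).symm, ← map_mul]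
      norm_num
    linear_combination (x*yi + x^2*yi^3*(3*x^2+a)) * hA3 + (a*yi^3*(3*x^2+a)) * hBA
      + (-9 * algebraMap ℚ R (1/6) * x * yi^3) * hxy
      + (9 * algebraMap ℚ R (1/6) * x * yi * (y*yi+1)) * hy + (2*x*yi) * hC
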